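/- Invertibility of the derivative under perturbation: Under the quantitative hypotheses (⋆), for every ε ∈ (0, ε₀] and every x in the closed ball B̄(p,R), the partial derivative D_x y(ε,x) : X₁ × X₂ → X₁ × X₂ of y with respect to its second argument is a linear isomorphism. -/

import Mathlib

open Metric Set

set_option maxHeartbeats 1000000 in
/-- **Invertibility of the derivative under perturbation.**
Under the quantitative hypotheses (⋆), for every `ε ∈ (0, ε₀]` and every
`x` in the closed ball, the partial derivative `D_x y(ε,x)` is a linear isomorphism. -/
theorem derivative_is_isomorphism_under_perturbation
    {X₁ X₂ : Type*}
    [NormedAddCommGroup X₁] [NormedSpace ℝ X₁] [FiniteDimensional ℝ X₁]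
    [NormedAddCommGroup X₂] [NormedSpace ℝ X₂] [FiniteDimensional ℝ X₂]
    (y : ℝ × (X₁ × X₂) → X₁ × X₂)
    (ε₀ R : ℝ) (hε₀ : 0 < ε₀) (hR : 0 < R)
    (p : X₁ × X₂)
    (hy : ContDiff ℝ 2 y)
    (hyp : y (0, p) = 0)
    (hy₂ : ∀ x ∈ closedBall p R, (y (0, x)).2 = 0)
    (A₁₁ : X₁ ≃L[ℝ] X₁) (A₂₂ : X₂ ≃L[ℝ] X₂)
    (hA₁₁ : (A₁₁ : X₁ →L[ℝ] X₁) = fderiv ℝ (fun x₁ => (y (0, (x₁, p.2))).1) p.1)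
    (hA₂₂ : (A₂₂ : X₂ →L[ℝ] X₂)
      = deriv (fun ε => fderiv ℝ (fun x₂ => (y (ε, (p.1, x₂))).2) p.2) 0)
    (δ₁ δ₂ η₁ η₂ : ℝ)
    (hδ₁0 : 0 ≤ δ₁) (hδ₂0 : 0 ≤ δ₂) (hη₁0 : 0 ≤ η₁) (hη₂0 : 0 ≤ η₂)
    (hδ₁ : ∀ ε ∈ Icc (0:ℝ) ε₀, ∀ x ∈ closedBall p R,
      ‖fderiv ℝ (fun x' => (y (ε, x')).1) x
        - (A₁₁ : X₁ →L[ℝ] X₁).comp (ContinuousLinearMap.fst ℝ X₁ X₂)‖ ≤ δ₁)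
    (hδ₂ : ∀ ε ∈ Icc (0:ℝ) ε₀, ∀ x ∈ closedBall p R,
      ‖deriv (fun ε' => fderiv ℝ (fun x' => (y (ε', x')).2) x) ε
        - (A₂₂ : X₂ →L[ℝ] X₂).comp (ContinuousLinearMap.snd ℝ X₁ X₂)‖ ≤ δ₂)
    (hη₁ : ∀ ε ∈ Icc (0:ℝ) ε₀, ‖deriv (fun ε' => (y (ε', p)).1) ε‖ ≤ η₁)
    (hη₂ : ∀ ε ∈ Icc (0:ℝ) ε₀, ‖deriv (fun ε' => (y (ε', p)).2) ε‖ ≤ η₂)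
    (hm₁ : ε₀ * η₁ + δ₁ * R < ‖(A₁₁.symm : X₁ →L[ℝ] X₁)‖⁻¹ * R)
    (hm₂ : η₂ + δ₂ * R < ‖(A₂₂.symm : X₂ →L[ℝ] X₂)‖⁻¹ * R) :
    ∀ ε ∈ Ioc (0:ℝ) ε₀, ∀ x ∈ closedBall p R,
      ∃ M : (X₁ × X₂) ≃L[ℝ] (X₁ × X₂),
        (M : (X₁ × X₂) →L[ℝ] X₁ × X₂) = fderiv ℝ (fun x' => y (ε, x')) x := by
  intro ε hε x hx
  have hy' : Differentiable ℝ y := hy.differentiable (by norm_num)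
  have hD : ContDiff ℝ 1 (fderiv ℝ y) := hy.fderiv_right (by norm_num)
  set ι : (X₁ × X₂) →L[ℝ] ℝ × (X₁ × X₂) := ContinuousLinearMap.inr ℝ ℝ (X₁ × X₂) with hι
  have hΦ : ∀ (e : ℝ) (x' : X₁ × X₂),
      HasFDerivAt (fun x'' => y (e, x'')) ((fderiv ℝ y (e, x')).comp ι) x' :=
    fun e x' => (hy'.differentiableAt.hasFDerivAt).comp x' (hasFDerivAt_prodMk_right e x')
  set F₁ : ℝ → (X₁ × X₂) → ((X₁ × X₂) →L[ℝ] X₁) :=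
    fun e x' => (ContinuousLinearMap.fst ℝ X₁ X₂).comp ((fderiv ℝ y (e, x')).comp ι) with hF₁def
  set F₂ : ℝ → (X₁ × X₂) → ((X₁ × X₂) →L[ℝ] X₂) :=
    fun e x' => (ContinuousLinearMap.snd ℝ X₁ X₂).comp ((fderiv ℝ y (e, x')).comp ι) with hF₂def
  have hΦ₁ : ∀ (e : ℝ) (x' : X₁ × X₂), HasFDerivAt (fun x'' => (y (e, x'')).1) (F₁ e x') x' :=
    fun e x' => ((ContinuousLinearMap.fst ℝ X₁ X₂).hasFDerivAt).comp x' (hΦ e x')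
  have hΦ₂ : ∀ (e : ℝ) (x' : X₁ × X₂), HasFDerivAt (fun x'' => (y (e, x'')).2) (F₂ e x') x' :=
    fun e x' => ((ContinuousLinearMap.snd ℝ X₁ X₂).hasFDerivAt).comp x' (hΦ e x')
  have hfd₁ : ∀ (e : ℝ) (x' : X₁ × X₂), fderiv ℝ (fun x'' => (y (e, x'')).1) x' = F₁ e x' :=
    fun e x' => (hΦ₁ e x').fderiv
  have hfd₂ : ∀ (e : ℝ) (x' : X₁ × X₂), fderiv ℝ (fun x'' => (y (e, x'')).2) x' = F₂ e x' :=
    fun e x' => (hΦ₂ e x').fderiv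
  -- F₂ at time 0 vanishes on the closed ball
  have hF₂0 : ∀ x' ∈ closedBall p R, F₂ 0 x' = 0 := by
    have hball : EqOn (F₂ 0) (fun _ => (0 : (X₁ × X₂) →L[ℝ] X₂)) (ball p R) := by
      intro x' hx'
      have heq : (fun x'' => (y (0, x'')).2) =ᶠ[nhds x'] (fun _ => (0 : X₂)) := by
        filter_upwards [isOpen_ball.mem_nhds hx'] with z hz
        exact hy₂ z (ball_subset_closedBall hz)
      have h0 : fderiv ℝ (fun x'' => (y (0, x'')).2) x' = 0 := by
        rw [heq.fderiv_eq, fderiv_fun_const]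
        rfl
      rw [← hfd₂ 0 x', h0]
    have hcont : Continuous (F₂ 0) := by
      apply Continuous.clm_comp continuous_const
      apply Continuous.clm_comp _ continuous_const
      exact hD.continuous.comp (continuous_const.prodMk continuous_id)
    have := (hball.closure hcont continuous_const)
    rw [closure_ball p hR.ne'] at this
    intro x' hx'
    exact this hx'
  -- C₁ and C₂
  set C₁ : (X₁ × X₂) →L[ℝ] X₁ :=
    (A₁₁ : X₁ →L[ℝ] X₁).comp (ContinuousLinearMap.fst ℝ X₁ X₂) with hC₁def
  set C₂ : (X₁ × X₂) →L[ℝ] X₂ :=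
    (A₂₂ : X₂ →L[ℝ] X₂).comp (ContinuousLinearMap.snd ℝ X₁ X₂) with hC₂def
  -- the map e ↦ F₂ e x is differentiable
  have hF₂diff : ∀ e : ℝ, HasDerivAt (fun e' => F₂ e' x) (deriv (fun e' => F₂ e' x) e) e := by
    intro e
    have hdiff : DifferentiableAt ℝ (fun e' => F₂ e' x) e := by
      apply DifferentiableAt.clm_comp (differentiableAt_const _)
      apply DifferentiableAt.clm_comp _ (differentiableAt_const _)
      exact ((hD.differentiable one_ne_zero).comp
        ((differentiable_id.prodMk (differentiable_const x)))) e
    exact hdiff.hasDerivAt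
  have hfun2 : (fun e' => fderiv ℝ (fun x'' => (y (e', x'')).2) x) = fun e' => F₂ e' x := by
    funext e'
    exact hfd₂ e' x
  have hδ₂' : ∀ e ∈ Icc (0:ℝ) ε₀, ‖deriv (fun e' => F₂ e' x) e - C₂‖ ≤ δ₂ := by
    intro e he
    have := hδ₂ e he x hx
    rwa [hfun2] at this
  -- Mean value estimate for G e = F₂ e x - e • C₂
  have hG : ∀ e : ℝ, HasDerivAt (fun e' => F₂ e' x - e' • C₂)
      (deriv (fun e' => F₂ e' x) e - C₂) e := by
    intro e
    have h2 : HasDerivAt (fun e' : ℝ => e' • C₂) ((1:ℝ) • C₂) e :=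
      (hasDerivAt_id e).smul_const C₂
    rw [one_smul] at h2
    exact (hF₂diff e).sub h2
  have hMVT : ‖(F₂ ε x - ε • C₂) - (F₂ 0 x - (0:ℝ) • C₂)‖ ≤ δ₂ * ‖ε - 0‖ :=
    (convex_Icc (0:ℝ) ε₀).norm_image_sub_le_of_norm_hasDerivWithin_le
      (fun e he => (hG e).hasDerivWithinAt) (fun e he => hδ₂' e he)
      ⟨le_refl 0, hε₀.le⟩ ⟨hε.1.le, hε.2⟩
  have hF₂bound : ‖F₂ ε x - ε • C₂‖ ≤ δ₂ * ε := by
    rw [hF₂0 x hx] at hMVT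
    simpa [abs_of_pos hε.1] using hMVT
  have hF₁bound : ‖F₁ ε x - C₁‖ ≤ δ₁ := by
    have := hδ₁ ε ⟨hε.1.le, hε.2⟩ x hx
    rwa [hfd₁ ε x] at this
  -- the full derivative
  set L : (X₁ × X₂) →L[ℝ] (X₁ × X₂) := (fderiv ℝ y (ε, x)).comp ι with hLdef
  have hLfd : fderiv ℝ (fun x' => y (ε, x')) x = L := (hΦ ε x).fderiv
  -- bounds on the inverses
  have hc₁ : ‖(A₁₁.symm : X₁ →L[ℝ] X₁)‖ * δ₁ < 1 := by
    rcases eq_or_lt_of_le (norm_nonneg (A₁₁.symm : X₁ →L[ℝ] X₁)) with h0 | hpos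
    · rw [← h0, zero_mul]; norm_num
    · have hδlt : δ₁ < ‖(A₁₁.symm : X₁ →L[ℝ] X₁)‖⁻¹ := by
        have h1 : δ₁ * R < ‖(A₁₁.symm : X₁ →L[ℝ] X₁)‖⁻¹ * R := by
          linarith [mul_nonneg hε₀.le hη₁0]
        exact lt_of_mul_lt_mul_right h1 hR.le
      calc ‖(A₁₁.symm : X₁ →L[ℝ] X₁)‖ * δ₁
          < ‖(A₁₁.symm : X₁ →L[ℝ] X₁)‖ * ‖(A₁₁.symm : X₁ →L[ℝ] X₁)‖⁻¹ :=
            (mul_lt_mul_iff_right₀ hpos).mpr hδlt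
        _ = 1 := mul_inv_cancel₀ hpos.ne'
  have hc₂ : ‖(A₂₂.symm : X₂ →L[ℝ] X₂)‖ * δ₂ < 1 := by
    rcases eq_or_lt_of_le (norm_nonneg (A₂₂.symm : X₂ →L[ℝ] X₂)) with h0 | hpos
    · rw [← h0, zero_mul]; norm_num
    · have hδlt : δ₂ < ‖(A₂₂.symm : X₂ →L[ℝ] X₂)‖⁻¹ := by
        have h1 : δ₂ * R < ‖(A₂₂.symm : X₂ →L[ℝ] X₂)‖⁻¹ * R := by linarith
        exact lt_of_mul_lt_mul_right h1 hR.le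
      calc ‖(A₂₂.symm : X₂ →L[ℝ] X₂)‖ * δ₂
          < ‖(A₂₂.symm : X₂ →L[ℝ] X₂)‖ * ‖(A₂₂.symm : X₂ →L[ℝ] X₂)‖⁻¹ :=
            (mul_lt_mul_iff_right₀ hpos).mpr hδlt
        _ = 1 := mul_inv_cancel₀ hpos.ne'
  -- injectivity of L
  have hker : ∀ v : X₁ × X₂, L v = 0 → v = 0 := by
    intro v hv
    have hv1 : F₁ ε x v = 0 := by
      have : F₁ ε x v = (L v).1 := rfl
      rw [this, hv]; rfl
    have hv2 : F₂ ε x v = 0 := by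
      have : F₂ ε x v = (L v).2 := rfl
      rw [this, hv]; rfl
    have hA1v : ‖(A₁₁ : X₁ →L[ℝ] X₁) v.1‖ ≤ δ₁ * ‖v‖ := by
      have h1 : (A₁₁ : X₁ →L[ℝ] X₁) v.1 = (C₁ - F₁ ε x) v := by
        simp [hC₁def, hv1]
      rw [h1]
      calc ‖(C₁ - F₁ ε x) v‖ ≤ ‖C₁ - F₁ ε x‖ * ‖v‖ := (C₁ - F₁ ε x).le_opNorm v
        _ = ‖F₁ ε x - C₁‖ * ‖v‖ := by rw [norm_sub_rev]
        _ ≤ δ₁ * ‖v‖ := mul_le_mul_of_nonneg_right hF₁bound (norm_nonneg v)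
    have hA2v : ε * ‖(A₂₂ : X₂ →L[ℝ] X₂) v.2‖ ≤ (δ₂ * ε) * ‖v‖ := by
      have h1 : ε • (A₂₂ : X₂ →L[ℝ] X₂) v.2 = (ε • C₂ - F₂ ε x) v := by
        simp [hC₂def, hv2]
      have h2 : ‖ε • (A₂₂ : X₂ →L[ℝ] X₂) v.2‖ = ε * ‖(A₂₂ : X₂ →L[ℝ] X₂) v.2‖ := by
        rw [norm_smul, Real.norm_eq_abs, abs_of_pos hε.1]
      rw [← h2, h1]
      calc ‖(ε • C₂ - F₂ ε x) v‖ ≤ ‖ε • C₂ - F₂ ε x‖ * ‖v‖ := (ε • C₂ - F₂ ε x).le_opNorm v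
        _ = ‖F₂ ε x - ε • C₂‖ * ‖v‖ := by rw [norm_sub_rev]
        _ ≤ (δ₂ * ε) * ‖v‖ := mul_le_mul_of_nonneg_right hF₂bound (norm_nonneg v)
    have hA2v' : ‖(A₂₂ : X₂ →L[ℝ] X₂) v.2‖ ≤ δ₂ * ‖v‖ := by
      have h3 : (δ₂ * ε) * ‖v‖ = ε * (δ₂ * ‖v‖) := by ring
      rw [h3] at hA2v
      exact le_of_mul_le_mul_left hA2v hε.1
    have hv1' : ‖v.1‖ ≤ (‖(A₁₁.symm : X₁ →L[ℝ] X₁)‖ * δ₁) * ‖v‖ := by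
      have h1 : v.1 = (A₁₁.symm : X₁ →L[ℝ] X₁) ((A₁₁ : X₁ →L[ℝ] X₁) v.1) := by simp
      calc ‖v.1‖ = ‖(A₁₁.symm : X₁ →L[ℝ] X₁) ((A₁₁ : X₁ →L[ℝ] X₁) v.1)‖ := by rw [← h1]
        _ ≤ ‖(A₁₁.symm : X₁ →L[ℝ] X₁)‖ * ‖(A₁₁ : X₁ →L[ℝ] X₁) v.1‖ :=
            (A₁₁.symm : X₁ →L[ℝ] X₁).le_opNorm _
        _ ≤ ‖(A₁₁.symm : X₁ →L[ℝ] X₁)‖ * (δ₁ * ‖v‖) :=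
            mul_le_mul_of_nonneg_left hA1v (norm_nonneg _)
        _ = (‖(A₁₁.symm : X₁ →L[ℝ] X₁)‖ * δ₁) * ‖v‖ := by ring
    have hv2' : ‖v.2‖ ≤ (‖(A₂₂.symm : X₂ →L[ℝ] X₂)‖ * δ₂) * ‖v‖ := by
      have h1 : v.2 = (A₂₂.symm : X₂ →L[ℝ] X₂) ((A₂₂ : X₂ →L[ℝ] X₂) v.2) := by simp
      calc ‖v.2‖ = ‖(A₂₂.symm : X₂ →L[ℝ] X₂) ((A₂₂ : X₂ →L[ℝ] X₂) v.2)‖ := by rw [← h1]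
        _ ≤ ‖(A₂₂.symm : X₂ →L[ℝ] X₂)‖ * ‖(A₂₂ : X₂ →L[ℝ] X₂) v.2‖ :=
            (A₂₂.symm : X₂ →L[ℝ] X₂).le_opNorm _
        _ ≤ ‖(A₂₂.symm : X₂ →L[ℝ] X₂)‖ * (δ₂ * ‖v‖) :=
            mul_le_mul_of_nonneg_left hA2v' (norm_nonneg _)
        _ = (‖(A₂₂.symm : X₂ →L[ℝ] X₂)‖ * δ₂) * ‖v‖ := by ring
    set c : ℝ := max (‖(A₁₁.symm : X₁ →L[ℝ] X₁)‖ * δ₁) (‖(A₂₂.symm : X₂ →L[ℝ] X₂)‖ * δ₂) with hc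
    have hclt : c < 1 := max_lt hc₁ hc₂
    have hvle : ‖v‖ ≤ c * ‖v‖ := by
      have h1 : ‖v.1‖ ≤ c * ‖v‖ :=
        hv1'.trans (mul_le_mul_of_nonneg_right (le_max_left _ _) (norm_nonneg v))
      have h2 : ‖v.2‖ ≤ c * ‖v‖ :=
        hv2'.trans (mul_le_mul_of_nonneg_right (le_max_right _ _) (norm_nonneg v))
      calc ‖v‖ = max ‖v.1‖ ‖v.2‖ := rfl
        _ ≤ c * ‖v‖ := max_le h1 h2
    by_contra hne
    have hpos : 0 < ‖v‖ := norm_pos_iff.mpr hne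
    have hlt : c * ‖v‖ < 1 * ‖v‖ := mul_lt_mul_of_pos_right hclt hpos
    rw [one_mul] at hlt
    linarith
  have hinj : Function.Injective L := by
    intro u w huw
    have h0 : L (u - w) = 0 := by rw [map_sub, huw, sub_self]
    have := hker _ h0
    exact sub_eq_zero.mp this
  have hsurj : Function.Surjective L :=
    (LinearMap.injective_iff_surjective (f := (L : (X₁ × X₂) →ₗ[ℝ] X₁ × X₂))).mp hinj
  let e : (X₁ × X₂) ≃ₗ[ℝ] X₁ × X₂ :=
    LinearEquiv.ofBijective (L : (X₁ × X₂) →ₗ[ℝ] X₁ × X₂) ⟨hinj, hsurj⟩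
  refine ⟨e.toContinuousLinearEquiv, ?_⟩
  rw [hLfd]
  exact ContinuousLinearMap.ext fun v => rfl
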